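/- Let X, Y be measurable spaces, μ a σ-finite measure on X, and k: X × Y → ℝ a product-measurable kernel function defining the integral operator (Lf)(y) = ∫ k(x,y) f(x) μ(dx). Let t_X, t_Y be measurable bijections of X and Y respectively such that μ is invariant under t_X. Then (Lf) ∘ t_Y = L(f ∘ t_X) holds for all measurable f (for which either side is defined) if and only if for every y ∈ Y, k(t_X⁻¹ x, y) = k(x, t_Y y) for μ-almost every x ∈ X. -/

import Mathlib

open MeasureTheory Set

lemma aux_one_sided {X : Type} [MeasurableSpace X] {μ : Measure X} [SigmaFinite μ]
    {g h : X → ℝ} (hg : Measurable g) (hh : Measurable h)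
    (H : ∀ s : Set X, MeasurableSet s → IntegrableOn g s μ → IntegrableOn h s μ →
      ∫ x in s, g x ∂μ = ∫ x in s, h x ∂μ) :
    μ {x | h x < g x} = 0 := by
  set A : ℕ → Set X := fun n =>
    {x | h x < g x} ∩ {x | |g x| ≤ n} ∩ {x | |h x| ≤ n} ∩ spanningSets μ n with hA
  have hAmeas : ∀ n, MeasurableSet (A n) := by
    intro n
    exact (((measurableSet_lt hh hg).inter
      (measurableSet_le (hg.abs) measurable_const)).inter
      (measurableSet_le (hh.abs) measurable_const)).inter (measurableSet_spanningSets μ n)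
  have hcover : {x | h x < g x} = ⋃ n, A n := by
    ext x
    simp only [mem_iUnion, hA, mem_inter_iff, mem_setOf_eq]
    constructor
    · intro hx
      obtain ⟨m, hm⟩ : ∃ m, x ∈ spanningSets μ m := by
        have hx2 : x ∈ ⋃ i, spanningSets μ i := by
          rw [iUnion_spanningSets]; trivial
        exact mem_iUnion.1 hx2
      obtain ⟨n, hn1, hn2⟩ : ∃ n : ℕ, |g x| ≤ n ∧ |h x| ≤ n := by
        obtain ⟨n, hn⟩ := exists_nat_ge (max |g x| |h x|)
        exact ⟨n, (le_max_left _ _).trans hn, (le_max_right _ _).trans hn⟩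
      refine ⟨max n m, ⟨⟨⟨hx, ?_⟩, ?_⟩, monotone_spanningSets μ (le_max_right n m) hm⟩⟩
      · exact hn1.trans (by exact_mod_cast Nat.cast_le.2 (le_max_left n m))
      · exact hn2.trans (by exact_mod_cast Nat.cast_le.2 (le_max_left n m))
    · rintro ⟨n, ⟨⟨⟨hx, _⟩, _⟩, _⟩⟩
      exact hx
  rw [hcover]
  refine measure_iUnion_null fun n => ?_
  have hAfin : μ (A n) ≠ ⊤ := by
    refine (lt_of_le_of_lt (measure_mono ?_) (measure_spanningSets_lt_top μ n)).ne
    intro x hx; exact hx.2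
  have hgint : IntegrableOn g (A n) μ := by
    refine Measure.integrableOn_of_bounded hAfin hg.aestronglyMeasurable (M := n) ?_
    refine ae_restrict_of_forall_mem (hAmeas n) fun x hx => ?_
    simpa using hx.1.1.2
  have hhint : IntegrableOn h (A n) μ := by
    refine Measure.integrableOn_of_bounded hAfin hh.aestronglyMeasurable (M := n) ?_
    refine ae_restrict_of_forall_mem (hAmeas n) fun x hx => ?_
    simpa using hx.1.2
  have hint : ∫ x in A n, (g - h) x ∂μ = 0 := by
    have := H (A n) (hAmeas n) hgint hhint
    simp only [Pi.sub_apply]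
    rw [integral_sub hgint hhint, this, sub_self]
  have hnonneg : 0 ≤ᵐ[μ.restrict (A n)] (g - h) := by
    refine ae_restrict_of_forall_mem (hAmeas n) fun x hx => ?_
    have : h x < g x := hx.1.1.1
    simp [sub_nonneg, this.le]
  have hzero : (g - h) =ᵐ[μ.restrict (A n)] 0 :=
    (integral_eq_zero_iff_of_nonneg_ae hnonneg (hgint.sub hhint)).1 hint
  have : μ.restrict (A n) {x | (g - h) x ≠ 0} = 0 := hzero
  have hsub : A n ⊆ {x | (g - h) x ≠ 0} := by
    intro x hx
    have : h x < g x := hx.1.1.1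
    simp [sub_ne_zero, this.ne']
  refine le_antisymm ?_ zero_le
  calc μ (A n) = μ.restrict (A n) (A n) := by
        rw [Measure.restrict_apply_self]
    _ ≤ μ.restrict (A n) {x | (g - h) x ≠ 0} := measure_mono hsub
    _ = 0 := this

lemma aux_ae_eq {X : Type} [MeasurableSpace X] {μ : Measure X} [SigmaFinite μ]
    {g h : X → ℝ} (hg : Measurable g) (hh : Measurable h)
    (H : ∀ s : Set X, MeasurableSet s → IntegrableOn g s μ → IntegrableOn h s μ →
      ∫ x in s, g x ∂μ = ∫ x in s, h x ∂μ) :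
    g =ᵐ[μ] h := by
  have h1 := aux_one_sided hg hh H
  have h2 := aux_one_sided hh hg (fun s hs h1 h2 => (H s hs h2 h1).symm)
  have : {x | g x ≠ h x} ⊆ {x | h x < g x} ∪ {x | g x < h x} := by
    intro x hx
    rcases lt_or_gt_of_ne hx with h | h
    · exact Or.inr h
    · exact Or.inl h
  exact measure_mono_null this (measure_union_null h1 h2)


/-- Let `μ` be a σ-finite measure on `X`, `k : X × Y → ℝ` a
product-measurable kernel function defining the integral operator
`(L f) y = ∫ k (x, y) * f x ∂μ`, and `tX`, `tY` measurable bijections of `X`, `Y` with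
`μ` invariant under `tX`.  Then `(L f) ∘ tY = L (f ∘ tX)` for all measurable `f` for
which the integrals are defined, if and only if for every `y`,
`k (tX⁻¹ x, y) = k (x, tY y)` for `μ`-almost every `x`. -/
theorem statement14 {X Y : Type} [MeasurableSpace X] [MeasurableSpace Y]
    (μ : Measure X) [SigmaFinite μ]
    (k : X → Y → ℝ) (hk : Measurable fun p : X × Y => k p.1 p.2)
    (tX : X ≃ᵐ X) (tY : Y ≃ᵐ Y)
    (hμinv : Measure.map tX μ = μ) :
    (∀ f : X → ℝ, Measurable f → ∀ y : Y,
        Integrable (fun x => k x (tY y) * f x) μ →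
        Integrable (fun x => k x y * f (tX x)) μ →
        ∫ x, k x (tY y) * f x ∂μ = ∫ x, k x y * f (tX x) ∂μ) ↔
      ∀ y : Y, ∀ᵐ x ∂μ, k (tX.symm x) y = k x (tY y) := by
  have hmeasg : ∀ y : Y, Measurable fun x => k (tX.symm x) y := fun y =>
    hk.comp (tX.symm.measurable.prodMk measurable_const)
  have hmeash : ∀ y : Y, Measurable fun x => k x y := fun y =>
    hk.comp (measurable_id.prodMk measurable_const)
  -- change of variables identity
  have key : ∀ (F : X → ℝ), ∫ x, F x ∂μ = ∫ x, F (tX x) ∂μ := by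
    intro F
    conv_lhs => rw [← hμinv]
    exact MeasureTheory.integral_map_equiv tX F
  have keyInt : ∀ (F : X → ℝ), Integrable F μ ↔ Integrable (F ∘ tX) μ := by
    intro F
    conv_lhs => rw [← hμinv]
    exact MeasureTheory.integrable_map_equiv tX F
  constructor
  · intro H y
    refine aux_ae_eq (hmeasg y) (hk.comp (measurable_id.prodMk measurable_const)) ?_
    intro s hs hgint hhint
    set f : X → ℝ := s.indicator 1 with hf
    have hfm : Measurable f := measurable_one.indicator hs
    have e1 : (fun x => k x (tY y) * f x) = s.indicator fun x => k x (tY y) := by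
      funext x
      by_cases hx : x ∈ s <;> simp [hf, Set.indicator, hx]
    have e2 : (fun x => k x y * f (tX x)) =
        (s.indicator fun x => k (tX.symm x) y) ∘ tX := by
      funext x
      by_cases hx : tX x ∈ s <;>
        simp [hf, Set.indicator, hx, Function.comp, tX.symm_apply_apply]
    have i1 : Integrable (fun x => k x (tY y) * f x) μ := by
      rw [e1, integrable_indicator_iff hs]; exact hhint
    have i2 : Integrable (fun x => k x y * f (tX x)) μ := by
      rw [e2, ← keyInt]
      rw [integrable_indicator_iff hs]; exact hgint
    have := H f hfm y i1 i2
    calc ∫ x in s, k (tX.symm x) y ∂μ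
        = ∫ x, (s.indicator fun x => k (tX.symm x) y) x ∂μ :=
          (integral_indicator hs).symm
      _ = ∫ x, k x y * f (tX x) ∂μ := by
          rw [key (s.indicator fun x => k (tX.symm x) y), e2]; rfl
      _ = ∫ x, k x (tY y) * f x ∂μ := this.symm
      _ = ∫ x in s, k x (tY y) ∂μ := by rw [e1, integral_indicator hs]
  · intro H f hfm y _ _
    have h1 : ∫ x, k x y * f (tX x) ∂μ = ∫ x, k (tX.symm x) y * f x ∂μ := by
      rw [key fun x => k (tX.symm x) y * f x]
      simp [tX.symm_apply_apply]
    rw [h1]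
    exact integral_congr_ae ((H y).mono fun x hx => by dsimp only; rw [← hx])
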